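/- First-order modified equation for Euler's method: let f : ℝ^D → ℝ^D be smooth (C³), and let f̃_h(x) = f(x) − (h/2) ∂_x f(x)[f(x)]. If φ̃^h denotes the time-h flow of dx/dt = f̃_h(x) (with h treated as a fixed parameter), then for each x, ‖φ̃ʰ(x) − (x + h f(x))‖ = O(h³) as h → 0. -/

import Mathlib

open Asymptotics Set Metric

section EulerAux

variable {E : Type*} [NormedAddCommGroup E] [NormedSpace ℝ E]

/-- Bootstrap lemma: a solution of an ODE whose field is bounded by `M` on the unit ball
around the initial point stays at distance at most `M * t` for `t * M ≤ 1`. -/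
lemma euler_aux_stay (g : E → E) (w : ℝ → E) (x : E) (M δ : ℝ)
    (hw0 : w 0 = x) (hw : ∀ t, HasDerivAt w (g (w t)) t)
    (hg : ∀ y ∈ closedBall x 1, ‖g y‖ < M)
    (hδM : δ * M ≤ 1) (hδ : 0 ≤ δ) :
    ∀ t ∈ Icc (0:ℝ) δ, ‖w t - x‖ ≤ M * t := by
  have hM0 : 0 ≤ M := le_of_lt (lt_of_le_of_lt (norm_nonneg _)
    (hg x (mem_closedBall_self zero_le_one)))
  intro t ht
  refine image_norm_le_of_norm_deriv_right_lt_deriv_boundary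
    (f := fun t => w t - x) (f' := fun t => g (w t)) (a := 0) (b := δ)
    (B := fun t => M * t) (B' := fun _ => M) ?_ ?_ ?_ ?_ ?_ ht
  · exact fun s _ => ((hw s).sub_const x).continuousAt.continuousWithinAt
  · exact fun s _ => ((hw s).sub_const x).hasDerivWithinAt
  · simp [hw0]
  · intro s
    simpa using (hasDerivAt_id s).const_mul M
  · intro s hs heq
    have hball : w s ∈ closedBall x 1 := by
      rw [mem_closedBall_iff_norm, heq]
      calc M * s ≤ M * δ := by
            exact mul_le_mul_of_nonneg_left (le_of_lt hs.2) hM0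
        _ ≤ 1 := by rw [mul_comm]; exact hδM
    exact hg _ hball

/-- Mean value bound on a symmetric interval, for a function vanishing at `0`. -/
lemma euler_aux_bnd {v v' : ℝ → E} {C T : ℝ} (h0 : v 0 = 0)
    (hv : ∀ s, HasDerivAt v (v' s) s) (hb : ∀ s, |s| ≤ T → ‖v' s‖ ≤ C)
    {t : ℝ} (ht : |t| ≤ T) : ‖v t‖ ≤ C * |t| := by
  have hT : 0 ≤ T := le_trans (abs_nonneg t) ht
  have h1 := Convex.norm_image_sub_le_of_norm_hasDerivWithin_le
    (f := v) (f' := v') (s := closedBall (0:ℝ) T)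
    (fun s _ => (hv s).hasDerivWithinAt)
    (fun s hs => hb s (by simpa [Real.dist_eq] using hs))
    (convex_closedBall 0 T) (mem_closedBall_self hT)
    (by simpa [Real.dist_eq] using ht)
  simpa [h0, Real.norm_eq_abs] using h1

end EulerAux

/-- First-order modified equation for Euler's method: with
`f̃_h(x) = f(x) - (h/2) ∂_x f(x)[f(x)]` and `ψ h t x` the time-`t` flow of
`dx/dt = f̃_h(x)` (with `h` a fixed parameter), one has
`ψ h h x - (x + h f(x)) = O(h³)` as `h → 0`, for each `x`. -/
theorem euler_modified_equation {D : ℕ}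
    (f : EuclideanSpace ℝ (Fin D) → EuclideanSpace ℝ (Fin D))
    (hf : ContDiff ℝ 3 f)
    (ftilde : ℝ → EuclideanSpace ℝ (Fin D) → EuclideanSpace ℝ (Fin D))
    (hft : ∀ h x, ftilde h x = f x - (h / 2) • fderiv ℝ f x (f x))
    (ψ : ℝ → ℝ → EuclideanSpace ℝ (Fin D) → EuclideanSpace ℝ (Fin D))
    (hψ0 : ∀ h x, ψ h 0 x = x)
    (hψ : ∀ h t x, HasDerivAt (fun s => ψ h s x) (ftilde h (ψ h t x)) t)
    (x : EuclideanSpace ℝ (Fin D)) :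
    (fun h : ℝ => ψ h h x - (x + h • f x)) =O[nhds 0] (fun h : ℝ => h ^ 3) := by
  have hf1 : ContDiff ℝ 1 f := hf.of_le (by norm_num)
  -- the function q y = Df(y)[f(y)]
  set q : EuclideanSpace ℝ (Fin D) → EuclideanSpace ℝ (Fin D) :=
    fun y => fderiv ℝ f y (f y) with hq_def
  have hq : ContDiff ℝ 2 q :=
    (hf.fderiv_right (by norm_num)).clm_apply (hf.of_le (by norm_num))
  -- the modified vector field, as a function of (h, y)
  set F : ℝ × EuclideanSpace ℝ (Fin D) → EuclideanSpace ℝ (Fin D) :=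
    fun p => f p.2 - (p.1 / 2) • q p.2 with hF_def
  have hFc : ContDiff ℝ 1 F :=
    (hf1.comp contDiff_snd).sub
      ((contDiff_fst.div_const 2).smul ((hq.of_le (by norm_num)).comp contDiff_snd))
  -- the second derivative field
  set G : ℝ × EuclideanSpace ℝ (Fin D) → EuclideanSpace ℝ (Fin D) :=
    fun p => fderiv ℝ f p.2 (F p) - (p.1 / 2) • fderiv ℝ q p.2 (F p) with hG_def
  have hGc : ContDiff ℝ 1 G := by
    have h1 : ContDiff ℝ 1 (fun p : ℝ × EuclideanSpace ℝ (Fin D) => fderiv ℝ f p.2) :=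
      ((hf.fderiv_right (m := 2) (by norm_num)).of_le (by norm_num)).comp contDiff_snd
    have h2 : ContDiff ℝ 1 (fun p : ℝ × EuclideanSpace ℝ (Fin D) => fderiv ℝ q p.2) :=
      (hq.fderiv_right (m := 1) (by norm_num)).comp contDiff_snd
    exact (h1.clm_apply hFc).sub ((contDiff_fst.div_const 2).smul (h2.clm_apply hFc))
  have hfd : Differentiable ℝ f := hf1.differentiable one_ne_zero
  have hqd : Differentiable ℝ q := hq.differentiable (by norm_num)
  have hFy : ∀ (h : ℝ) (y), HasFDerivAt (fun z => F (h, z))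
      (fderiv ℝ f y - (h / 2) • fderiv ℝ q y) y := fun h y =>
    ((hfd y).hasFDerivAt).sub (((hqd y).hasFDerivAt).const_smul (h / 2))
  -- first derivative of the flow
  have hu' : ∀ (h t : ℝ), HasDerivAt (fun s => ψ h s x) (F (h, ψ h t x)) t := by
    intro h t
    have := hψ h t x
    rw [hft] at this
    exact this
  -- second derivative of the flow
  have hu'' : ∀ (h t : ℝ), HasDerivAt (fun s => F (h, ψ h s x)) (G (h, ψ h t x)) t := by
    intro h t
    have h1 := (hFy h (ψ h t x)).comp_hasDerivAt t (hu' h t)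
    simpa [hG_def, ContinuousLinearMap.sub_apply, Function.comp_def] using h1
  -- compact set and bounds
  set K : Set (ℝ × EuclideanSpace ℝ (Fin D)) := Icc (-1:ℝ) 1 ×ˢ closedBall x 1 with hK_def
  have hKco : IsCompact K := isCompact_Icc.prod (isCompact_closedBall x 1)
  have hKcv : Convex ℝ K := (convex_Icc _ _).prod (convex_closedBall x 1)
  obtain ⟨M₀, hM₀⟩ := hKco.exists_bound_of_continuousOn hFc.continuous.continuousOn
  set M : ℝ := max M₀ 0 + 1 with hM_def
  have hMpos : 0 < M := by positivity
  have hM : ∀ p ∈ K, ‖F p‖ < M :=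
    fun p hp => lt_of_le_of_lt (hM₀ p hp) (lt_of_le_of_lt (le_max_left _ _) (lt_add_one _))
  have hGd : Differentiable ℝ G := hGc.differentiable one_ne_zero
  obtain ⟨L₀, hL₀⟩ := hKco.exists_bound_of_continuousOn
    ((hGc.continuous_fderiv one_ne_zero).continuousOn)
  set L : ℝ := max L₀ 0 with hL_def
  have hL0 : 0 ≤ L := le_max_right _ _
  have hGlip : ∀ p ∈ K, ∀ p' ∈ K, ‖G p - G p'‖ ≤ L * ‖p - p'‖ := by
    intro p hp p' hp'
    exact hKcv.norm_image_sub_le_of_norm_fderiv_le (fun z _ => hGd z)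
      (fun z hz => le_trans (hL₀ z hz) (le_max_left _ _)) hp' hp
  set δ : ℝ := min 1 (1 / M) with hδ_def
  have hδpos : 0 < δ := lt_min one_pos (by positivity)
  rw [isBigO_iff]
  refine ⟨L * M + L, ?_⟩
  filter_upwards [Metric.ball_mem_nhds (0:ℝ) hδpos] with h hh
  have hhδ : |h| ≤ δ := by
    rw [mem_ball, Real.dist_eq, sub_zero] at hh
    exact le_of_lt hh
  have hh1 : |h| ≤ 1 := hhδ.trans (min_le_left _ _)
  have hhK : h ∈ Icc (-1:ℝ) 1 := mem_Icc.mpr (abs_le.mp hh1)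
  have hhM : |h| * M ≤ 1 := by
    have h1 : |h| * M ≤ (1 / M) * M :=
      mul_le_mul_of_nonneg_right (hhδ.trans (min_le_right _ _)) hMpos.le
    rwa [one_div_mul_cancel (ne_of_gt hMpos)] at h1
  -- the flow stays in the unit ball
  have hstay : ∀ t, |t| ≤ |h| → ‖ψ h t x - x‖ ≤ M * |t| := by
    intro t ht
    rcases le_or_gt 0 t with h0 | h0
    · have := euler_aux_stay (fun y => F (h, y)) (fun s => ψ h s x) x M |h| (hψ0 h x)
        (hu' h) (fun y hy => hM (h, y) ⟨hhK, hy⟩) hhM (abs_nonneg h) t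
        ⟨h0, by rwa [abs_of_nonneg h0] at ht⟩
      rwa [abs_of_nonneg h0]
    · have hw : ∀ s : ℝ, HasDerivAt (fun s => ψ h (-s) x)
          ((-1 : ℝ) • F (h, ψ h (-s) x)) s := by
        intro s
        have := HasDerivAt.scomp (h := fun s : ℝ => -s) (x := s)
          (hu' h (-s)) ((hasDerivAt_id s).neg)
        simpa [Function.comp_def] using this
      have := euler_aux_stay (fun y => (-1 : ℝ) • F (h, y)) (fun s => ψ h (-s) x) x M |h|
        (by simpa using hψ0 h x) hw
        (fun y hy => by simpa [norm_smul] using hM (h, y) ⟨hhK, hy⟩) hhM (abs_nonneg h)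
        (-t) ⟨by linarith, by rwa [abs_of_neg h0] at ht⟩
      rw [abs_of_neg h0]
      simpa using this
  have hmem : ∀ t, |t| ≤ |h| → (h, ψ h t x) ∈ K := by
    intro t ht
    refine ⟨hhK, ?_⟩
    rw [mem_closedBall_iff_norm]
    calc ‖ψ h t x - x‖ ≤ M * |t| := hstay t ht
      _ ≤ M * |h| := mul_le_mul_of_nonneg_left ht hMpos.le
      _ ≤ 1 := by rw [mul_comm]; exact hhM
  have hxK : ∀ s : ℝ, s ∈ Icc (-1:ℝ) 1 → (s, x) ∈ K :=
    fun s hs => ⟨hs, mem_closedBall_self zero_le_one⟩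
  -- Lipschitz bound for the second derivative along the flow
  have hg1 : ∀ t, |t| ≤ |h| →
      ‖F (h, ψ h t x) - F (h, x) - t • G (h, x)‖ ≤ L * (M * |h|) * |t| := by
    intro t ht
    refine euler_aux_bnd (v := fun t => F (h, ψ h t x) - F (h, x) - t • G (h, x))
      (v' := fun t => G (h, ψ h t x) - G (h, x)) ?_ ?_ ?_ ht
    · simp [hψ0]
    · intro s
      simpa [Pi.sub_def] using ((hu'' h s).sub_const (F (h, x))).sub
        ((hasDerivAt_id s).smul_const (G (h, x)))
    · intro s hs
      have hdiff : (h, ψ h s x) - (h, x) = ((0:ℝ), ψ h s x - x) := by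
        simp [Prod.ext_iff]
      calc ‖G (h, ψ h s x) - G (h, x)‖ ≤ L * ‖(h, ψ h s x) - (h, x)‖ :=
            hGlip _ (hmem s hs) _ (hxK h hhK)
        _ = L * ‖ψ h s x - x‖ := by
            rw [hdiff, Prod.norm_def]
            simp [max_eq_right (norm_nonneg _)]
        _ ≤ L * (M * |s|) := mul_le_mul_of_nonneg_left (hstay s hs) hL0
        _ ≤ L * (M * |h|) := by
            exact mul_le_mul_of_nonneg_left (mul_le_mul_of_nonneg_left hs hMpos.le) hL0
  -- second order Taylor bound for the flow
  have hg0 : ‖ψ h h x - x - h • F (h, x) - (h ^ 2 / 2) • G (h, x)‖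
      ≤ L * (M * |h|) * |h| * |h| := by
    refine euler_aux_bnd
      (v := fun t => ψ h t x - x - t • F (h, x) - (t ^ 2 / 2) • G (h, x))
      (v' := fun t => F (h, ψ h t x) - F (h, x) - t • G (h, x)) ?_ ?_ ?_ (le_refl |h|)
    · simp [hψ0]
    · intro s
      have d1 : HasDerivAt (fun t : ℝ => (t ^ 2 / 2) • G (h, x)) (s • G (h, x)) s := by
        have h2 := ((hasDerivAt_pow 2 s).div_const 2).smul_const (G (h, x))
        have h3 : ((2 : ℕ) : ℝ) * s ^ (2 - 1) / 2 = s := by push_cast; ring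
        rwa [h3] at h2
      simpa [Pi.sub_def] using (((hu' h s).sub_const x).sub
        ((hasDerivAt_id s).smul_const (F (h, x)))).sub d1
    · intro s hs
      exact le_trans (hg1 s hs)
        (mul_le_mul_of_nonneg_left hs (by positivity))
  -- the key algebraic identity
  have hq0 : G (0, x) = q x := by
    simp [hG_def, hF_def, hq_def]
  have hGx : ‖G (h, x) - q x‖ ≤ L * |h| := by
    rw [← hq0]
    have hdiff : ((h : ℝ), x) - ((0 : ℝ), x) = ((h : ℝ), (0 : EuclideanSpace ℝ (Fin D))) := by
      simp [Prod.ext_iff]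
    calc ‖G (h, x) - G (0, x)‖ ≤ L * ‖((h : ℝ), x) - ((0 : ℝ), x)‖ :=
          hGlip _ (hxK h hhK) _ (hxK 0 (by norm_num))
      _ = L * |h| := by
          rw [hdiff, Prod.norm_def]
          simp [Real.norm_eq_abs, max_eq_left (abs_nonneg h)]
  have hid : ψ h h x - (x + h • f x) =
      (ψ h h x - x - h • F (h, x) - (h ^ 2 / 2) • G (h, x))
        + (h ^ 2 / 2) • (G (h, x) - q x) := by
    have hFhx : F (h, x) = f x - (h / 2) • q x := rfl
    rw [hFhx]
    module
  calc ‖ψ h h x - (x + h • f x)‖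
      ≤ ‖ψ h h x - x - h • F (h, x) - (h ^ 2 / 2) • G (h, x)‖
        + ‖(h ^ 2 / 2) • (G (h, x) - q x)‖ := by
        rw [hid]; exact norm_add_le _ _
    _ ≤ L * (M * |h|) * |h| * |h| + |h ^ 2 / 2| * (L * |h|) := by
        refine add_le_add hg0 ?_
        rw [norm_smul, Real.norm_eq_abs]
        exact mul_le_mul_of_nonneg_left hGx (abs_nonneg _)
    _ ≤ (L * M + L) * ‖h ^ 3‖ := by
        have habs : |h ^ 2 / 2| = |h| ^ 2 / 2 := by
          rw [abs_div, abs_pow]; norm_num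
        rw [Real.norm_eq_abs, abs_pow, habs]
        have hLh : 0 ≤ L * |h| ^ 3 := by positivity
        nlinarith [abs_nonneg h, hL0, hMpos.le]
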